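/- Let P be the generating function of the set of Dyck paths with no up-run of length greater than 2 and no peak at any height in {2r+3 : r ≥ 0}, and let Q be the generating function of the set of Dyck paths with no up-run of length greater than 2 and no peak at any height in {2r+2 : r ≥ 0}. Then, as formal power series, P = 1 + z·P + z^2·Q·P and Q = 1 + z·Q. -/

import Mathlib

/-- The height of a path (list of up/down steps, `true` = up = +1, `false` = down = −1)
after its first `k` steps. -/
def heightAt (p : List Bool) (k : ℕ) : ℤ :=
  ((p.take k).count true : ℤ) - ((p.take k).count false : ℤ)

/-- A Dyck path: all partial sums nonnegative and total sum zero. -/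
def IsDyck (p : List Bool) : Prop :=
  (∀ k, 0 ≤ heightAt p k) ∧ heightAt p p.length = 0

/-- A peak at height `h`: an up-step immediately followed by a down-step,
the height after the up-step being `h`. -/
def HasPeakAt (p : List Bool) (h : ℤ) : Prop :=
  ∃ i, p[i]? = some true ∧ p[i+1]? = some false ∧ heightAt p (i+1) = h

/-- A valley at height `h`: a down-step immediately followed by an up-step,
the height after the down-step being `h`. -/
def HasValleyAt (p : List Bool) (h : ℤ) : Prop :=
  ∃ i, p[i]? = some false ∧ p[i+1]? = some true ∧ heightAt p (i+1) = h

/-- `p` has an up-run of length `m`: a maximal block of exactly `m` consecutive up-steps. -/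
def HasUpRun (p : List Bool) (m : ℕ) : Prop :=
  ∃ i, (∀ j, j < m → p[i+j]? = some true) ∧
    (i = 0 ∨ p[i-1]? = some false) ∧
    (p[i+m]? = some false ∨ i + m = p.length)

/-- `p` has a down-run of length `m`: a maximal block of exactly `m` consecutive down-steps. -/
def HasDownRun (p : List Bool) (m : ℕ) : Prop :=
  ∃ i, (∀ j, j < m → p[i+j]? = some false) ∧
    (i = 0 ∨ p[i-1]? = some true) ∧
    (p[i+m]? = some true ∨ i + m = p.length)

/-- Generating function of the set of Dyck paths satisfying `Q`:
the coefficient of `z^n` is the number of such paths of semilength `n`. -/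
noncomputable def genFun (Q : List Bool → Prop) : PowerSeries ℕ :=
  PowerSeries.mk fun n => Set.ncard {p : List Bool | p.length = 2 * n ∧ IsDyck p ∧ Q p}

lemma heightAt_zero (p : List Bool) : heightAt p 0 = 0 := by simp [heightAt]

lemma heightAt_append (A B : List Bool) (k : ℕ) :
    heightAt (A ++ B) k = heightAt A k + heightAt B (k - A.length) := by
  simp [heightAt, List.take_append, List.count_append]
  ring

lemma heightAt_of_le (p : List Bool) {k : ℕ} (h : p.length ≤ k) :
    heightAt p k = heightAt p p.length := by
  simp [heightAt, List.take_of_length_le h, List.take_length]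

lemma heightAt_succ (p : List Bool) (k : ℕ) :
    heightAt p (k + 1) = heightAt p k +
      (match p[k]? with | some true => 1 | some false => -1 | none => 0) := by
  rcases h : p[k]? with _ | b
  · have hlen : p.length ≤ k := by simpa [List.getElem?_eq_none_iff] using h
    rw [heightAt_of_le p hlen, heightAt_of_le p (le_trans hlen (Nat.le_succ k))]; simp
  · have : p.take (k+1) = p.take k ++ [b] := by
      rw [List.take_succ, h]; rfl
    cases b <;> simp [heightAt, this, List.count_append] <;> ring

lemma heightAt_succ_true (p : List Bool) {k : ℕ} (h : p[k]? = some true) :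
    heightAt p (k + 1) = heightAt p k + 1 := by rw [heightAt_succ, h]

lemma heightAt_succ_false (p : List Bool) {k : ℕ} (h : p[k]? = some false) :
    heightAt p (k + 1) = heightAt p k - 1 := by rw [heightAt_succ, h]; ring

lemma heightAt_succ_none (p : List Bool) {k : ℕ} (h : p[k]? = none) :
    heightAt p (k + 1) = heightAt p k := by
  have hlen : p.length ≤ k := by simpa [List.getElem?_eq_none_iff] using h
  rw [heightAt_of_le p hlen, heightAt_of_le p (le_trans hlen (Nat.le_succ k))]

lemma heightAt_succ_le (p : List Bool) (k : ℕ) :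
    heightAt p (k + 1) ≤ heightAt p k + 1 := by
  rcases h : p[k]? with _ | b
  · rw [heightAt_succ_none p h]; omega
  · cases b
    · rw [heightAt_succ_false p h]; omega
    · rw [heightAt_succ_true p h]

lemma heightAt_succ_ge (p : List Bool) (k : ℕ) :
    heightAt p k - 1 ≤ heightAt p (k + 1) := by
  rcases h : p[k]? with _ | b
  · rw [heightAt_succ_none p h]; omega
  · cases b
    · rw [heightAt_succ_false p h]
    · rw [heightAt_succ_true p h]; omega

/-- three consecutive up-steps give an up-run of length > 2 -/
lemma three_ups (p : List Bool) (i : ℕ) (h0 : p[i]? = some true)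
    (h1 : p[i+1]? = some true) (h2 : p[i+2]? = some true) :
    ∃ m, 2 < m ∧ HasUpRun p m := by
  have hi2 : i + 2 < p.length := by
    by_contra h
    rw [List.getElem?_eq_none_iff.2 (by omega)] at h2; cases h2
  -- right end
  have hew : i + 3 ≤ p.length ∧ p[p.length]? ≠ some true := by
    constructor
    · omega
    · rw [List.getElem?_eq_none_iff.2 (le_refl _)]; simp
  set E := fun t => i + 3 ≤ t ∧ p[t]? ≠ some true with hE
  have hEex : ∃ t, E t := ⟨p.length, hew⟩
  set e := Nat.find hEex with he
  have hespec : E e := Nat.find_spec hEex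
  have hemin : ∀ t, t < e → ¬ E t := fun t ht => Nat.find_min hEex ht
  have hele : e ≤ p.length := Nat.find_le hew
  -- left end
  set S := fun s => ∀ j, j < i + 1 → s ≤ j → p[j]? = some true with hS
  have hSex : ∃ s, S s := ⟨i, fun j hj hj2 => by
    have : j = i := by omega
    rwa [this]⟩
  set s := Nat.find hSex with hs
  have hsspec : S s := Nat.find_spec hSex
  have hsle : s ≤ i := Nat.find_le (fun j hj hj2 => by
    have : j = i := by omega
    rwa [this])
  have hall : ∀ t, s ≤ t → t < e → p[t]? = some true := by
    intro t hst hte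
    rcases le_or_gt t i with h | h
    · exact hsspec t (by omega) hst
    · rcases lt_or_ge t (i + 3) with h' | h'
      · have ht12 : t = i + 1 ∨ t = i + 2 := by omega
        rcases ht12 with rfl | rfl
        · exact h1
        · exact h2
      · have := hemin t hte
        simp only [hE, not_and, not_not] at this
        exact this h'
  have hsei : i + 3 ≤ e := hespec.1
  refine ⟨e - s, by omega, s, ?_, ?_, ?_⟩
  · intro j hj
    exact hall (s + j) (by omega) (by omega)
  · rcases Nat.eq_zero_or_pos s with h | h
    · exact Or.inl h
    right
    have hns : ¬ S (s - 1) := Nat.find_min hSex (by omega)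
    simp only [hS, not_forall] at hns
    obtain ⟨j, hj1, hj2, hj3⟩ := hns
    have hjs : j = s - 1 := by
      by_contra hc
      exact hj3 (hsspec j hj1 (by omega))
    subst hjs
    have hlt : s - 1 < p.length := by omega
    rcases hb : p[s-1]? with _ | b
    · rw [List.getElem?_eq_none_iff] at hb; omega
    · cases b
      · rfl
      · exact absurd hb hj3
  · rcases eq_or_lt_of_le hele with h | h
    · right; omega
    · left
      rcases hb : p[e]? with _ | b
      · rw [List.getElem?_eq_none_iff] at hb
        have : s + (e - s) = e := by omega
        omega
      · cases b
        · have : s + (e - s) = e := by omega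
          rw [this]; exact hb
        · exact absurd hb hespec.2

/-- If no peak at B+1 and no three consecutive ups, heights stay ≤ B (B ≥ 1). -/
lemma height_bound (p : List Bool) (B : ℤ) (hB : 1 ≤ B) (hd : IsDyck p)
    (hpk : ¬ HasPeakAt p (B + 1))
    (h3 : ∀ i, ¬ (p[i]? = some true ∧ p[i+1]? = some true ∧ p[i+2]? = some true)) :
    ∀ k, heightAt p k ≤ B := by
  by_contra hc
  push_neg at hc
  have hex : ∃ k, B + 1 ≤ heightAt p k := by
    obtain ⟨k, hk⟩ := hc; exact ⟨k, by omega⟩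
  set k0 := Nat.find hex with hk0
  have hspec : B + 1 ≤ heightAt p k0 := Nat.find_spec hex
  have hmin : ∀ t, t < k0 → heightAt p t ≤ B := by
    intro t ht
    have := Nat.find_min hex ht
    omega
  have hk0pos : k0 ≠ 0 := by
    intro h; rw [h, heightAt_zero] at hspec; omega
  obtain ⟨j, hk0j⟩ : ∃ j, k0 = j + 1 := ⟨k0 - 1, by omega⟩
  rw [hk0j] at hspec hmin
  have hj : heightAt p j ≤ B := hmin j (by omega)
  have hjt : p[j]? = some true := by
    rcases hb : p[j]? with _ | b
    · have := heightAt_succ_none p hb; omega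
    · cases b
      · have := heightAt_succ_false p hb; omega
      · rfl
  have hstep := heightAt_succ_true p hjt
  have hval : heightAt p (j+1) = B + 1 := by omega
  have hjB : heightAt p j = B := by omega
  have hjlt : j + 1 < p.length := by
    rcases lt_or_ge (j+1) p.length with h | h
    · exact h
    · exfalso
      rw [heightAt_of_le p h, hd.2] at hval; omega
  have hjpos : j ≠ 0 := by
    intro h; rw [h, heightAt_zero] at hjB; omega
  obtain ⟨j', rfl⟩ : ∃ j', j = j' + 1 := ⟨j - 1, by omega⟩
  rcases hb : p[j'+1+1]? with _ | b
  · rw [List.getElem?_eq_none_iff] at hb; omega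
  cases b
  · exact hpk ⟨j' + 1, hjt, hb, hval⟩
  · have hj' : heightAt p j' ≤ B := hmin j' (by omega)
    have hj't : p[j']? = some true := by
      rcases hb' : p[j']? with _ | b'
      · rw [List.getElem?_eq_none_iff] at hb'; omega
      · cases b'
        · have := heightAt_succ_false p hb'; omega
        · rfl
    exact h3 j' ⟨hj't, hjt, hb⟩

lemma heightAt_cons (s : Bool) (t : List Bool) (k : ℕ) :
    heightAt (s :: t) (k + 1) = (cond s 1 (-1) : ℤ) + heightAt t k := by
  have h : (s :: t : List Bool) = [s] ++ t := rfl
  rw [h, heightAt_append]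
  have h2 : k + 1 - ([s] : List Bool).length = k := by simp
  rw [h2]
  have h3 : heightAt [s] (k+1) = (cond s 1 (-1) : ℤ) := by
    cases s <;> simp [heightAt, List.take_of_length_le (by simp : ([true]:List Bool).length ≤ k+1),
      List.take_of_length_le (by simp : ([false]:List Bool).length ≤ k+1)]
  rw [h3]

/-- encoding of Dyck paths of height ≤ 2 by the heights at even positions -/
def go : Bool → List Bool → List Bool
  | prev, [] => [!prev, false]
  | prev, x :: xs => (!prev) :: x :: go x xs

def hv (b : Bool) : ℤ := cond b 2 0

lemma go_length : ∀ (b : List Bool) (prev : Bool), (go prev b).length = 2 * (b.length + 1)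
  | [], prev => by simp [go]
  | x :: xs, prev => by simp [go, go_length xs x]; ring

lemma go_height : ∀ (b : List Bool) (prev : Bool),
    (∀ k, -hv prev ≤ heightAt (go prev b) k ∧ heightAt (go prev b) k ≤ 2 - hv prev) ∧
      heightAt (go prev b) (go prev b).length = -hv prev := by
  intro b
  induction b with
  | nil =>
    intro prev
    constructor
    · intro k
      match k with
      | 0 => rw [heightAt_zero]; cases prev <;> simp [hv]
      | 1 =>
        have := heightAt_cons (!prev) [false] 0
        rw [heightAt_zero] at this
        simp only [go]
        rw [this]
        cases prev <;> simp [hv]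
      | (k+2) =>
        simp only [go]
        rw [heightAt_cons, heightAt_cons, heightAt_of_le _ (by simp)]
        cases prev <;> simp [hv, heightAt_zero]
    · simp only [go]
      rw [(by simp : ([!prev, false] : List Bool).length = 0 + 1 + 1),
        heightAt_cons, heightAt_cons, heightAt_zero]
      cases prev <;> simp [hv]
  | cons x xs ih =>
    intro prev
    have hgo : go prev (x :: xs) = (!prev) :: x :: go x xs := rfl
    have key : ∀ k, heightAt (go prev (x :: xs)) (k + 2) =
        (hv x - hv prev) + heightAt (go x xs) k := by
      intro k
      rw [hgo, heightAt_cons, heightAt_cons]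
      cases prev <;> cases x <;> simp [hv] <;> ring
    constructor
    · intro k
      match k with
      | 0 => rw [heightAt_zero]; cases prev <;> simp [hv]
      | 1 =>
        rw [hgo, heightAt_cons, heightAt_zero]
        cases prev <;> simp [hv]
      | (k+2) =>
        rw [key k]
        have := (ih x).1 k
        cases prev <;> cases x <;> simp [hv] at * <;> omega
    · have hlen : (go prev (x :: xs)).length = (go x xs).length + 2 := by
        rw [hgo]; simp [List.length_cons]
      rw [hlen, key]
      have := (ih x).2
      rw [this]
      ring

lemma go_surj : ∀ (n : ℕ) (prev : Bool) (p : List Bool), p.length = 2 * (n + 1) →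
    (∀ k, -hv prev ≤ heightAt p k) → (∀ k, heightAt p k ≤ 2 - hv prev) →
    heightAt p p.length = -hv prev → ∃ b, b.length = n ∧ go prev b = p := by
  intro n
  induction n with
  | zero =>
    intro prev p hlen hlo hhi hend
    match p, hlen with
    | [s1, s2], _ =>
      have h1 : heightAt [s1, s2] 1 = (cond s1 1 (-1) : ℤ) := by
        rw [heightAt_cons, heightAt_zero]; ring
      have h2 : heightAt [s1, s2] 2 = (cond s1 1 (-1) : ℤ) + cond s2 1 (-1) := by
        rw [heightAt_cons, heightAt_cons, heightAt_zero]; ring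
      have e2 : heightAt [s1, s2] 2 = -hv prev := by simpa using hend
      have hlo1 := hlo 1
      have hhi1 := hhi 1
      have hs1 : s1 = !prev := by
        rw [h1] at hlo1 hhi1
        cases prev <;> cases s1 <;>
          first | rfl | (exfalso; simp [hv] at hlo1 hhi1)
      have hs2 : s2 = false := by
        rw [h2, hs1] at e2
        cases prev <;> cases s2 <;> first | rfl | (simp [hv] at e2)
      refine ⟨[], rfl, ?_⟩
      simp only [go, hs1, hs2]
  | succ n ih =>
    intro prev p hlen hlo hhi hend
    match p, hlen with
    | s1 :: s2 :: rest, hlen =>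
      have hrl : rest.length = 2 * (n + 1) := by simp at hlen; omega
      have h1 : heightAt (s1 :: s2 :: rest) 1 = (cond s1 1 (-1) : ℤ) := by
        rw [heightAt_cons, heightAt_zero]; ring
      have hkey : ∀ k, heightAt (s1 :: s2 :: rest) (k + 2) =
          (cond s1 1 (-1) : ℤ) + cond s2 1 (-1) + heightAt rest k := by
        intro k
        rw [heightAt_cons, heightAt_cons]; ring
      -- s1 = !prev
      have hs1 : s1 = !prev := by
        have hlo1 := hlo 1
        have hhi1 := hhi 1
        rw [h1] at hlo1 hhi1
        cases prev <;> cases s1 <;>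
          first | rfl | (exfalso; simp [hv] at hlo1 hhi1)
      -- h2 = hv s2 - hv prev
      have h2v : (cond s1 1 (-1) : ℤ) + cond s2 1 (-1) = hv s2 - hv prev := by
        rw [hs1]; cases prev <;> cases s2 <;> simp [hv]
      have hlo' : ∀ k, -hv s2 ≤ heightAt rest k := by
        intro k
        have := hlo (k + 2)
        rw [hkey k, h2v] at this; omega
      have hhi' : ∀ k, heightAt rest k ≤ 2 - hv s2 := by
        intro k
        have := hhi (k + 2)
        rw [hkey k, h2v] at this; omega
      have hend' : heightAt rest rest.length = -hv s2 := by
        have hl : (s1 :: s2 :: rest).length = rest.length + 2 := by simp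
        rw [hl, hkey, h2v] at hend
        omega
      obtain ⟨b, hb, hgo⟩ := ih s2 rest hrl hlo' hhi' hend'
      refine ⟨s2 :: b, by simp [hb], ?_⟩
      simp only [go, hgo, hs1]

lemma go_inj (prev : Bool) : Function.Injective (go prev) := by
  intro b b' h
  induction b generalizing b' prev with
  | nil =>
    cases b' with
    | nil => rfl
    | cons y ys =>
      have h1 := congrArg List.length h
      rw [go_length, go_length] at h1
      simp at h1
  | cons x xs ih =>
    cases b' with
    | nil =>
      have h1 := congrArg List.length h
      rw [go_length, go_length] at h1
      simp at h1
    | cons y ys =>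
      have hx : x = y ∧ go x xs = go y ys := by
        simpa [go] using h
      obtain ⟨rfl, h2⟩ := hx
      rw [ih x h2]

/-- the unique Q-path of semilength n -/
def alt : ℕ → List Bool
  | 0 => []
  | n + 1 => true :: false :: alt n

lemma alt_length (n : ℕ) : (alt n).length = 2 * n := by
  induction n with
  | zero => rfl
  | succ n ih => simp [alt, ih]; ring

lemma alt_cons2 (n : ℕ) (k : ℕ) : heightAt (alt (n+1)) (k+2) = heightAt (alt n) k := by
  show heightAt (true :: false :: alt n) (k+1+1) = _
  rw [heightAt_cons, heightAt_cons]
  simp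

lemma alt_one (n : ℕ) : heightAt (alt (n+1)) 1 = 1 := by
  show heightAt (true :: false :: alt n) (0+1) = 1
  rw [heightAt_cons, heightAt_zero]
  simp

lemma alt_height (n : ℕ) : ∀ k, 0 ≤ heightAt (alt n) k ∧ heightAt (alt n) k ≤ 1 := by
  induction n with
  | zero => intro k; rw [heightAt_of_le _ (by simp [alt])]; simp [alt, heightAt_zero]
  | succ n ih =>
    intro k
    match k with
    | 0 => rw [heightAt_zero]; omega
    | 1 => rw [alt_one]; omega
    | (k + 2) =>
      rw [alt_cons2]
      have := ih k
      omega

lemma alt_dyck (n : ℕ) : IsDyck (alt n) := by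
  constructor
  · intro k; exact (alt_height n k).1
  · induction n with
    | zero => simp [alt, heightAt_zero]
    | succ n ih =>
      have hl : (alt (n+1)).length = 2*n + 2 := by rw [alt_length]; ring
      rw [hl, alt_cons2, ← alt_length n, ih]

lemma alt_uniq : ∀ (n : ℕ) (p : List Bool), p.length = 2 * n → IsDyck p →
    (∀ k, heightAt p k ≤ 1) → p = alt n := by
  intro n
  induction n with
  | zero => intro p hlen _ _; simpa [alt] using List.length_eq_zero_iff.1 (by omega)
  | succ n ih =>
    intro p hlen hd hhi
    match p, hlen with
    | s1 :: s2 :: rest, hlen =>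
      have hrl : rest.length = 2 * n := by simp at hlen; omega
      have h1 : heightAt (s1 :: s2 :: rest) 1 = (cond s1 1 (-1) : ℤ) := by
        rw [heightAt_cons, heightAt_zero]; ring
      have hkey : ∀ k, heightAt (s1 :: s2 :: rest) (k + 2) =
          (cond s1 1 (-1) : ℤ) + cond s2 1 (-1) + heightAt rest k := by
        intro k
        rw [heightAt_cons, heightAt_cons]; ring
      have hs1 : s1 = true := by
        have := hd.1 1
        rw [h1] at this
        cases s1 <;> first | rfl | (simp at this)
      have hs2 : s2 = false := by
        have h2' : heightAt (s1 :: s2 :: rest) 2 =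
            (cond s1 1 (-1) : ℤ) + cond s2 1 (-1) := by
          have := hkey 0
          rw [heightAt_zero] at this
          simpa using this
        have := hhi 2
        rw [h2', hs1] at this
        cases s2 <;> first | rfl | (simp at this)
      subst hs1; subst hs2
      have hd' : IsDyck rest := by
        constructor
        · intro k
          have := hd.1 (k + 2)
          rw [hkey k] at this; simp at this; omega
        · have := hd.2
          have hl : (true :: false :: rest).length = rest.length + 2 := by simp
          rw [hl, hkey] at this; simp at this; omega
      have hhi' : ∀ k, heightAt rest k ≤ 1 := by
        intro k
        have := hhi (k + 2)
        rw [hkey k] at this; simp at this; omega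
      rw [ih rest hrl hd' hhi']
      rfl

lemma heightAt_nil (k : ℕ) : heightAt [] k = 0 := by
  simp [heightAt]

lemma dyck_nil : IsDyck [] := ⟨fun k => by rw [heightAt_nil], by rw [heightAt_nil]⟩

lemma three_ups_height (p : List Bool) (i : ℕ) (h0 : p[i]? = some true)
    (h1 : p[i+1]? = some true) (h2 : p[i+2]? = some true) :
    heightAt p (i+3) = heightAt p i + 3 := by
  have e1 := heightAt_succ_true p h0
  have e2 := heightAt_succ_true p h1
  have e3 := heightAt_succ_true p h2
  have a2 : i + 1 + 1 = i + 2 := rfl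
  have a3 : i + 2 + 1 = i + 3 := rfl
  rw [a2] at e2
  rw [a3] at e3
  omega

/-- P-paths are exactly Dyck paths of height at most 2 -/
lemma setP_eq (n : ℕ) :
    {p : List Bool | p.length = 2*n ∧ IsDyck p ∧
        (∀ r : ℕ, ¬ HasPeakAt p (2 * (r : ℤ) + 3)) ∧ (∀ m : ℕ, 2 < m → ¬ HasUpRun p m)}
      = {p : List Bool | p.length = 2*n ∧ IsDyck p ∧ ∀ k, heightAt p k ≤ 2} := by
  ext p
  simp only [Set.mem_setOf_eq]
  constructor
  · rintro ⟨hl, hd, hpk, hur⟩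
    refine ⟨hl, hd, ?_⟩
    apply height_bound p 2 (by norm_num) hd
    · have := hpk 0
      norm_num at this ⊢
      exact this
    · rintro i ⟨a, b, c⟩
      obtain ⟨m, hm, hru⟩ := three_ups p i a b c
      exact hur m hm hru
  · rintro ⟨hl, hd, hh⟩
    refine ⟨hl, hd, ?_, ?_⟩
    · rintro r ⟨i, _, _, hhh⟩
      have h1 := hh (i+1)
      have hr : (0:ℤ) ≤ (r:ℤ) := Int.natCast_nonneg r
      omega
    · rintro m hm ⟨i, hall, -, -⟩
      have h0 : p[i]? = some true := by simpa using hall 0 (by omega)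
      have h1 : p[i+1]? = some true := hall 1 (by omega)
      have h2 : p[i+2]? = some true := hall 2 (by omega)
      have := three_ups_height p i h0 h1 h2
      have := hh (i+3)
      have := hd.1 i
      omega

/-- Q-paths are exactly Dyck paths of height at most 1 -/
lemma setQ_eq (n : ℕ) :
    {p : List Bool | p.length = 2*n ∧ IsDyck p ∧
        (∀ r : ℕ, ¬ HasPeakAt p (2 * (r : ℤ) + 2)) ∧ (∀ m : ℕ, 2 < m → ¬ HasUpRun p m)}
      = {p : List Bool | p.length = 2*n ∧ IsDyck p ∧ ∀ k, heightAt p k ≤ 1} := by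
  ext p
  simp only [Set.mem_setOf_eq]
  constructor
  · rintro ⟨hl, hd, hpk, hur⟩
    refine ⟨hl, hd, ?_⟩
    apply height_bound p 1 (by norm_num) hd
    · have := hpk 0
      norm_num at this ⊢
      exact this
    · rintro i ⟨a, b, c⟩
      obtain ⟨m, hm, hru⟩ := three_ups p i a b c
      exact hur m hm hru
  · rintro ⟨hl, hd, hh⟩
    refine ⟨hl, hd, ?_, ?_⟩
    · rintro r ⟨i, _, _, hhh⟩
      have h1 := hh (i+1)
      have hr : (0:ℤ) ≤ (r:ℤ) := Int.natCast_nonneg r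
      omega
    · rintro m hm ⟨i, hall, -, -⟩
      have h0 : p[i]? = some true := by simpa using hall 0 (by omega)
      have h1 : p[i+1]? = some true := hall 1 (by omega)
      have h2 : p[i+2]? = some true := hall 2 (by omega)
      have := three_ups_height p i h0 h1 h2
      have := hh (i+3)
      have := hd.1 i
      omega

lemma card_len (m : ℕ) : {b : List Bool | b.length = m}.ncard = 2 ^ m := by
  have h : {b : List Bool | b.length = m} = Set.range (List.ofFn : (Fin m → Bool) → List Bool) := by
    ext b
    simp only [Set.mem_setOf_eq, Set.mem_range]
    constructor
    · intro hb
      refine ⟨fun i => b[(i : ℕ)]'(by omega), ?_⟩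
      apply List.ext_getElem
      · simp [hb]
      · intro i h1 h2
        simp
    · rintro ⟨f, rfl⟩
      simp
  rw [h, ← Set.image_univ, Set.ncard_image_of_injective _ List.ofFn_injective,
    Set.ncard_univ]
  simp [Nat.card_eq_fintype_card]

def pc : ℕ → ℕ
  | 0 => 1
  | n + 1 => 2 ^ n

lemma card_setP (n : ℕ) :
    {p : List Bool | p.length = 2*n ∧ IsDyck p ∧ ∀ k, heightAt p k ≤ 2}.ncard = pc n := by
  cases n with
  | zero =>
    have h : {p : List Bool | p.length = 2*0 ∧ IsDyck p ∧ ∀ k, heightAt p k ≤ 2} = {[]} := by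
      ext p
      simp only [Set.mem_setOf_eq, Set.mem_singleton_iff]
      constructor
      · rintro ⟨hl, -, -⟩
        exact List.length_eq_zero_iff.1 (by omega)
      · rintro rfl
        exact ⟨rfl, dyck_nil, fun k => by rw [heightAt_nil]; norm_num⟩
    rw [h, Set.ncard_singleton]; rfl
  | succ n =>
    have h : {p : List Bool | p.length = 2*(n+1) ∧ IsDyck p ∧ ∀ k, heightAt p k ≤ 2}
        = go false '' {b : List Bool | b.length = n} := by
      ext p
      simp only [Set.mem_setOf_eq, Set.mem_image]
      constructor
      · rintro ⟨hl, hd, hh⟩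
        obtain ⟨b, hb, hgo⟩ := go_surj n false p hl
          (fun k => by have := hd.1 k; simpa [hv] using this)
          (fun k => by have := hh k; simpa [hv] using this)
          (by have := hd.2; simpa [hv] using this)
        exact ⟨b, hb, hgo⟩
      · rintro ⟨b, hb, rfl⟩
        refine ⟨by rw [go_length, hb], ⟨fun k => ?_, ?_⟩, fun k => ?_⟩
        · have := ((go_height b false).1 k).1; simpa [hv] using this
        · have := (go_height b false).2; simpa [hv] using this
        · have := ((go_height b false).1 k).2; simpa [hv] using this
    rw [h, Set.ncard_image_of_injective _ (go_inj false), card_len]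
    rfl

lemma card_setQ (n : ℕ) :
    {p : List Bool | p.length = 2*n ∧ IsDyck p ∧ ∀ k, heightAt p k ≤ 1}.ncard = 1 := by
  have h : {p : List Bool | p.length = 2*n ∧ IsDyck p ∧ ∀ k, heightAt p k ≤ 1} = {alt n} := by
    ext p
    simp only [Set.mem_setOf_eq, Set.mem_singleton_iff]
    constructor
    · rintro ⟨hl, hd, hh⟩
      exact alt_uniq n p hl hd hh
    · rintro rfl
      exact ⟨alt_length n, alt_dyck n, fun k => (alt_height n k).2⟩
  rw [h, Set.ncard_singleton]

lemma genP : genFun (fun p => (∀ r : ℕ, ¬ HasPeakAt p (2 * (r : ℤ) + 3)) ∧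
    (∀ m : ℕ, 2 < m → ¬ HasUpRun p m)) = PowerSeries.mk pc := by
  have h : ∀ n : ℕ, {p : List Bool | p.length = 2*n ∧ IsDyck p ∧
      (∀ r : ℕ, ¬ HasPeakAt p (2 * (r : ℤ) + 3)) ∧
      (∀ m : ℕ, 2 < m → ¬ HasUpRun p m)}.ncard = pc n := by
    intro n
    rw [setP_eq n]
    exact card_setP n
  unfold genFun
  exact congrArg PowerSeries.mk (funext h)

lemma genQ : genFun (fun p => (∀ r : ℕ, ¬ HasPeakAt p (2 * (r : ℤ) + 2)) ∧
    (∀ m : ℕ, 2 < m → ¬ HasUpRun p m)) = PowerSeries.mk (fun _ => 1) := by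
  have h : ∀ n : ℕ, {p : List Bool | p.length = 2*n ∧ IsDyck p ∧
      (∀ r : ℕ, ¬ HasPeakAt p (2 * (r : ℤ) + 2)) ∧
      (∀ m : ℕ, 2 < m → ¬ HasUpRun p m)}.ncard = 1 := by
    intro n
    rw [setQ_eq n]
    exact card_setQ n
  unfold genFun
  exact congrArg PowerSeries.mk (funext h)

lemma pc_sum (n : ℕ) : ∑ k ∈ Finset.range (n+1), pc k = 2 ^ n := by
  induction n with
  | zero => rfl
  | succ n ih =>
    rw [Finset.sum_range_succ, ih]
    show 2^n + pc (n+1) = 2^(n+1)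
    simp [pc]
    ring

lemma mulQP : (PowerSeries.mk (fun _ => (1:ℕ))) * (PowerSeries.mk pc)
    = PowerSeries.mk (fun n => 2 ^ n) := by
  ext n
  rw [PowerSeries.coeff_mul, PowerSeries.coeff_mk]
  simp only [PowerSeries.coeff_mk, one_mul]
  rw [Finset.Nat.sum_antidiagonal_eq_sum_range_succ_mk]
  have h := Finset.sum_range_reflect (fun j => pc j) (n+1)
  simp only [Nat.add_sub_cancel] at h
  calc ∑ k ∈ Finset.range (n+1), pc (k, n-k).2
      = ∑ k ∈ Finset.range (n+1), pc (n-k) := rfl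
    _ = ∑ k ∈ Finset.range (n+1), pc k := h
    _ = 2 ^ n := pc_sum n


/-- With `P` the generating function of Dyck paths with no up-run longer than 2 and no peak
at a height in `{2r+3 : r ≥ 0}`, and `Q` the same with peak heights avoiding
`{2r+2 : r ≥ 0}`, we have `P = 1 + zP + z²QP` and `Q = 1 + zQ`. -/
theorem stmt2 :
    (genFun (fun p => (∀ r : ℕ, ¬ HasPeakAt p (2 * (r : ℤ) + 3)) ∧
          (∀ m : ℕ, 2 < m → ¬ HasUpRun p m)) =
        1 + PowerSeries.X * genFun (fun p => (∀ r : ℕ, ¬ HasPeakAt p (2 * (r : ℤ) + 3)) ∧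
            (∀ m : ℕ, 2 < m → ¬ HasUpRun p m)) +
          PowerSeries.X ^ 2 *
            genFun (fun p => (∀ r : ℕ, ¬ HasPeakAt p (2 * (r : ℤ) + 2)) ∧
              (∀ m : ℕ, 2 < m → ¬ HasUpRun p m)) *
            genFun (fun p => (∀ r : ℕ, ¬ HasPeakAt p (2 * (r : ℤ) + 3)) ∧
              (∀ m : ℕ, 2 < m → ¬ HasUpRun p m))) ∧
    (genFun (fun p => (∀ r : ℕ, ¬ HasPeakAt p (2 * (r : ℤ) + 2)) ∧
          (∀ m : ℕ, 2 < m → ¬ HasUpRun p m)) =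
        1 + PowerSeries.X * genFun (fun p => (∀ r : ℕ, ¬ HasPeakAt p (2 * (r : ℤ) + 2)) ∧
            (∀ m : ℕ, 2 < m → ¬ HasUpRun p m))) := by

  constructor
  · rw [genP, genQ]
    have hre : (PowerSeries.X : PowerSeries ℕ)^2 * PowerSeries.mk (fun _ => 1) * PowerSeries.mk pc
        = PowerSeries.X * (PowerSeries.X * (PowerSeries.mk (fun _ => 1) * PowerSeries.mk pc)) := by
      ring
    rw [hre, mulQP]
    ext n
    match n with
    | 0 =>
      simp [PowerSeries.coeff_zero_X_mul, pc]
    | 1 =>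
      rw [map_add, map_add, PowerSeries.coeff_succ_X_mul, PowerSeries.coeff_succ_X_mul,
        PowerSeries.coeff_mk, PowerSeries.coeff_zero_X_mul, PowerSeries.coeff_mk]
      simp [PowerSeries.coeff_one, pc]
    | (m+2) =>
      rw [map_add, map_add, PowerSeries.coeff_succ_X_mul, PowerSeries.coeff_succ_X_mul,
        PowerSeries.coeff_succ_X_mul, PowerSeries.coeff_mk, PowerSeries.coeff_mk,
        PowerSeries.coeff_mk]
      simp [PowerSeries.coeff_one, pc, pow_succ]
      ring
  · rw [genQ]
    ext n
    match n with
    | 0 => simp [PowerSeries.coeff_zero_X_mul]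
    | (m+1) =>
      rw [map_add, PowerSeries.coeff_succ_X_mul, PowerSeries.coeff_mk, PowerSeries.coeff_mk]
      simp [PowerSeries.coeff_one]
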